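/- Let (Ω, F, P) be a probability space, d ≥ 1 fixed, and (p_n) a sequence of integers with p_n ≥ d + 2 and m_n := min{n, p_n} → ∞. For each n let λ̂_1(n) ≥ λ̂_2(n) ≥ ... ≥ λ̂_{p_n}(n) ≥ 0 be random variables (e.g. the ordered eigenvalues of YYᵀ/(np_n) in an approximate factor model with d common factors). Assume: (a) there is κ > 0 with P(λ̂_d(n) ≥ κ) → 1; and (b) m_n·λ̂_{d+1}(n) = O_p(1), i.e. for every ε > 0 there is C > 0 with P(m_n·λ̂_{d+1}(n) > C) ≤ ε for all n. Let c(n), c̃(n) > 0 with c(n) → 0, c̃(n) → 0 and c(n)·c̃(n)·m_n → ∞, and fix τ ∈ (0, 1). Define ŝ_j(n) = λ̂_j(n)/(1 + λ̂_j(n)), ŝ*_j(n) = (ŝ_j(n) + c(n))/(ŝ_{j+1}(n) + c(n)) − 1, r_j(n) = (ŝ*_{j+1}(n) + c̃(n))/(ŝ*_j(n) + c̃(n)), and S_n = {j ∈ {1, ..., p_n − 2} : r_j(n) ≤ τ}. Then P(S_n is nonempty and max S_n = d) → 1 as n → ∞. -/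

import Mathlib

set_option maxHeartbeats 1000000


open Filter MeasureTheory
open scoped ENNReal

/-- `ŝ_j = λ̂_j / (1 + λ̂_j)`. -/
noncomputable def sHat (lam : ℕ → ℝ) (j : ℕ) : ℝ := lam j / (1 + lam j)

/-- Factor-model first-round ridge ratio `ŝ*_j = (ŝ_j + c)/(ŝ_{j+1} + c) − 1`
(first powers rather than squares). -/
noncomputable def sStarF (lam : ℕ → ℝ) (c : ℝ) (j : ℕ) : ℝ :=
  (sHat lam j + c) / (sHat lam (j + 1) + c) - 1

/-- Factor-model second-round ridge ratio `r_j = (ŝ*_{j+1} + c̃)/(ŝ*_j + c̃)`. -/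
noncomputable def rRatioF (lam : ℕ → ℝ) (c ct : ℝ) (j : ℕ) : ℝ :=
  (sStarF lam c (j + 1) + ct) / (sStarF lam c j + ct)

lemma sHat_nonneg {lam : ℕ → ℝ} {j : ℕ} (h : 0 ≤ lam j) : 0 ≤ sHat lam j :=
  div_nonneg h (by linarith)

lemma sHat_le_self {lam : ℕ → ℝ} {j : ℕ} (h : 0 ≤ lam j) : sHat lam j ≤ lam j := by
  unfold sHat
  exact div_le_self h (by linarith)

lemma sHat_mono {lam : ℕ → ℝ} {i j : ℕ} (h0 : 0 ≤ lam j) (h : lam j ≤ lam i) :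
    sHat lam j ≤ sHat lam i := by
  unfold sHat
  rw [div_le_div_iff₀ (by linarith) (by linarith)]
  nlinarith

lemma ge_sHat_of_le {lam : ℕ → ℝ} {j : ℕ} {a : ℝ} (h0 : 0 ≤ a) (h : a ≤ lam j) :
    a / (1 + a) ≤ sHat lam j := by
  unfold sHat
  rw [div_le_div_iff₀ (by linarith) (by linarith)]
  nlinarith

/-- Deterministic core: under the good-event bounds and smallness conditions on the
ridges, the TDRR set is nonempty with supremum `d`. -/
lemma tdrr_core (lam : ℕ → ℝ) (c ct C m τ κ : ℝ) (p d : ℕ)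
    (hd : 1 ≤ d) (hp : d + 2 ≤ p)
    (hsorted : ∀ i j, 1 ≤ i → i ≤ j → j ≤ p → lam j ≤ lam i)
    (hnn : ∀ j, 1 ≤ j → j ≤ p → 0 ≤ lam j)
    (hκ : 0 < κ) (hC : 0 < C) (hm : 1 ≤ m)
    (hc : 0 < c) (hct : 0 < ct) (hτ0 : 0 < τ) (hτ1 : τ < 1)
    (hlamd : κ ≤ lam d) (hlamd1 : m * lam (d + 1) ≤ C)
    (h1 : C / m ≤ κ / (1 + κ) / 2)
    (h2 : ct * (C / m + c) ≤ τ * (κ / (1 + κ)) / 4)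
    (h3 : C / (m * c) ≤ ct)
    (h4 : τ * (C / (m * c) + ct) < ct) :
    {j | 1 ≤ j ∧ j ≤ p - 2 ∧ rRatioF lam c ct j ≤ τ}.Nonempty ∧
      sSup {j | 1 ≤ j ∧ j ≤ p - 2 ∧ rRatioF lam c ct j ≤ τ} = d := by
  have hm0 : (0:ℝ) < m := lt_of_lt_of_le one_pos hm
  set K : ℝ := κ / (1 + κ) with hK
  have hK0 : 0 < K := div_pos hκ (by linarith)
  -- λ_{d+1} ≤ C/m
  have hCm : 0 < C / m := div_pos hC hm0
  have hlam_tail : ∀ j, d + 1 ≤ j → j ≤ p → lam j ≤ C / m := by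
    intro j hj1 hj2
    have := hsorted (d + 1) j (by omega) hj1 hj2
    have h' : lam (d + 1) ≤ C / m := by
      rw [le_div_iff₀ hm0]; nlinarith
    linarith
  -- basic sHat facts
  have hs_nn : ∀ j, 1 ≤ j → j ≤ p → 0 ≤ sHat lam j := fun j a b => sHat_nonneg (hnn j a b)
  have hs_tail : ∀ j, d + 1 ≤ j → j ≤ p → sHat lam j ≤ C / m := by
    intro j hj1 hj2
    exact (sHat_le_self (hnn j (by omega) hj2)).trans (hlam_tail j hj1 hj2)
  have hs_mono : ∀ i j, 1 ≤ i → i ≤ j → j ≤ p → sHat lam j ≤ sHat lam i := by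
    intro i j a b e
    exact sHat_mono (hnn j (by omega) e) (hsorted i j a b e)
  have hsd : K ≤ sHat lam d := ge_sHat_of_le hκ.le hlamd
  -- sStar rewrite: sStarF = (s j − s (j+1)) / (s (j+1) + c)
  have hstar_eq : ∀ j, 0 < sHat lam (j + 1) + c →
      sStarF lam c j = (sHat lam j - sHat lam (j + 1)) / (sHat lam (j + 1) + c) := by
    intro j hpos
    unfold sStarF
    field_simp
    ring
  -- sStar nonneg for 1 ≤ j, j+1 ≤ p
  have hstar_nn : ∀ j, 1 ≤ j → j + 1 ≤ p → 0 ≤ sStarF lam c j := by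
    intro j a b
    have hden : 0 < sHat lam (j + 1) + c := by
      have := hs_nn (j + 1) (by omega) b; linarith
    rw [hstar_eq j hden]
    have := hs_mono j (j + 1) a (by omega) b
    exact div_nonneg (by linarith) hden.le
  -- sStar upper bound in the tail
  have hstar_tail : ∀ j, d + 1 ≤ j → j + 1 ≤ p → sStarF lam c j ≤ C / (m * c) := by
    intro j a b
    have hs1 : 0 ≤ sHat lam (j + 1) := hs_nn (j + 1) (by omega) b
    have hden : 0 < sHat lam (j + 1) + c := by linarith
    rw [hstar_eq j hden]
    have hnum : sHat lam j - sHat lam (j + 1) ≤ C / m := by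
      have := hs_tail j a (by omega)
      linarith
    have hnum0 : 0 ≤ sHat lam j - sHat lam (j + 1) := by
      have := hs_mono j (j + 1) (by omega) (by omega) b; linarith
    calc (sHat lam j - sHat lam (j + 1)) / (sHat lam (j + 1) + c)
        ≤ (C / m) / c := by
          apply div_le_div₀ hCm.le hnum hc; linarith
      _ = C / (m * c) := by rw [div_div]
  -- sStar lower bound at d
  have hstar_d : K / 2 / (C / m + c) ≤ sStarF lam c d := by
    have hb : d + 1 ≤ p := by omega
    have hs1 : 0 ≤ sHat lam (d + 1) := hs_nn (d + 1) (by omega) hb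
    have hden : 0 < sHat lam (d + 1) + c := by linarith
    rw [hstar_eq d hden]
    have hub : sHat lam (d + 1) ≤ C / m := hs_tail (d + 1) le_rfl hb
    have hnum : K / 2 ≤ sHat lam d - sHat lam (d + 1) := by linarith
    apply div_le_div₀ (by linarith [hsd]) hnum hden; linarith
  -- membership of d
  have hstar_d_pos : 0 < sStarF lam c d + ct := by
    have := hstar_nn d hd (by omega); linarith
  have hrd : rRatioF lam c ct d ≤ τ := by
    unfold rRatioF
    rw [div_le_iff₀ hstar_d_pos]
    have ht1 : sStarF lam c (d + 1) ≤ C / (m * c) := hstar_tail (d + 1) le_rfl (by omega)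
    have hlhs : sStarF lam c (d + 1) + ct ≤ 2 * ct := by linarith
    have hcm : 0 < C / m + c := by linarith
    have h5 : 2 * ct * (C / m + c) ≤ τ * (K / 2) := by nlinarith
    have h6 : 2 * ct ≤ τ * (K / 2) / (C / m + c) := (le_div_iff₀ hcm).mpr h5
    have h7 : τ * (K / 2) / (C / m + c) = τ * (K / 2 / (C / m + c)) := by ring
    have h8 : τ * (K / 2 / (C / m + c)) ≤ τ * sStarF lam c d :=
      mul_le_mul_of_nonneg_left hstar_d hτ0.le
    nlinarith [hct, hτ0]
  have hdmem : d ∈ {j | 1 ≤ j ∧ j ≤ p - 2 ∧ rRatioF lam c ct j ≤ τ} := by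
    refine ⟨hd, by omega, hrd⟩
  -- upper bound: every member is ≤ d
  have hub : ∀ j ∈ {j | 1 ≤ j ∧ j ≤ p - 2 ∧ rRatioF lam c ct j ≤ τ}, j ≤ d := by
    rintro j ⟨hj1, hj2, hj3⟩
    by_contra hcon
    push_neg at hcon
    have hj2' : j + 2 ≤ p := by omega
    have hjd : d + 1 ≤ j := hcon
    have hs1 : sStarF lam c j ≤ C / (m * c) := hstar_tail j hjd (by omega)
    have hs2 : 0 ≤ sStarF lam c (j + 1) := hstar_nn (j + 1) (by omega) (by omega)
    have hs3 : 0 ≤ sStarF lam c j := hstar_nn j (by omega) (by omega)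
    have hgt : τ < rRatioF lam c ct j := by
      unfold rRatioF
      rw [lt_div_iff₀ (by linarith)]
      have hmul : τ * (sStarF lam c j + ct) ≤ τ * (C / (m * c) + ct) :=
        mul_le_mul_of_nonneg_left (by linarith) hτ0.le
      linarith
    linarith
  refine ⟨⟨d, hdmem⟩, ?_⟩
  exact le_antisymm (csSup_le ⟨d, hdmem⟩ hub) (le_csSup ⟨d, hub⟩ hdmem)

theorem tdrr_consistent_factor (Ω : Type*) [MeasurableSpace Ω]
    (P : Measure Ω) [IsProbabilityMeasure P]
    (d : ℕ) (hd : 1 ≤ d)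
    (p : ℕ → ℕ) (hp : ∀ n, d + 2 ≤ p n)
    (hm : Tendsto (fun n => min n (p n)) atTop atTop)
    (lamhat : ℕ → ℕ → Ω → ℝ)
    (hmeas : ∀ n j, Measurable (lamhat n j))
    (hsorted : ∀ n (ω : Ω) i j, 1 ≤ i → i ≤ j → j ≤ p n → lamhat n j ω ≤ lamhat n i ω)
    (hnn : ∀ n j (ω : Ω), 1 ≤ j → j ≤ p n → 0 ≤ lamhat n j ω)
    (κ : ℝ) (hκ : 0 < κ)
    (hsignal : Tendsto (fun n => P {ω | κ ≤ lamhat n d ω}) atTop (nhds 1))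
    (htail : ∀ ε : ℝ≥0∞, 0 < ε → ∃ C : ℝ, 0 < C ∧ ∀ n : ℕ,
      P {ω | C < (min n (p n) : ℝ) * lamhat n (d + 1) ω} ≤ ε)
    (c ct : ℕ → ℝ) (hcpos : ∀ n, 0 < c n) (hctpos : ∀ n, 0 < ct n)
    (hc : Tendsto c atTop (nhds 0)) (hct : Tendsto ct atTop (nhds 0))
    (hccm : Tendsto (fun n => c n * ct n * (min n (p n) : ℝ)) atTop atTop)
    (τ : ℝ) (hτ0 : 0 < τ) (hτ1 : τ < 1) :
    Tendsto (fun n => P {ω |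
        {j | 1 ≤ j ∧ j ≤ p n - 2 ∧
          rRatioF (fun i => lamhat n i ω) (c n) (ct n) j ≤ τ}.Nonempty ∧
        sSup {j | 1 ≤ j ∧ j ≤ p n - 2 ∧
          rRatioF (fun i => lamhat n i ω) (c n) (ct n) j ≤ τ} = d})
      atTop (nhds 1) := by
  set mr : ℕ → ℝ := fun n => (min n (p n) : ℝ) with hmr
  have hm' : Tendsto mr atTop atTop := by
    have heq : mr = fun n => ((min n (p n) : ℕ) : ℝ) := by
      funext n; simp [hmr, Nat.cast_min]
    rw [heq]
    exact (tendsto_natCast_atTop_atTop (R := ℝ)).comp hm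
  rw [ENNReal.tendsto_nhds ENNReal.one_ne_top]
  intro ε hε
  obtain ⟨C, hC, htailC⟩ := htail (ε / 2) (ENNReal.half_pos hε.ne')
  set K : ℝ := κ / (1 + κ) with hKdef
  have hK0 : 0 < K := div_pos hκ (by linarith)
  -- eventual deterministic conditions
  have ev_m1 : ∀ᶠ n in atTop, 1 ≤ mr n := hm'.eventually_ge_atTop 1
  have hCm0 : Tendsto (fun n => C / mr n) atTop (nhds 0) :=
    tendsto_const_nhds.div_atTop hm'
  have ev1 : ∀ᶠ n in atTop, C / mr n ≤ K / 2 :=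
    hCm0.eventually (eventually_le_nhds (by positivity))
  have hδ : Tendsto (fun n => C / mr n + c n) atTop (nhds 0) := by
    simpa using hCm0.add hc
  have hctδ : Tendsto (fun n => ct n * (C / mr n + c n)) atTop (nhds 0) := by
    simpa using hct.mul hδ
  have ev2 : ∀ᶠ n in atTop, ct n * (C / mr n + c n) ≤ τ * K / 4 :=
    hctδ.eventually (eventually_le_nhds (by positivity))
  have hCE : Tendsto (fun n => C / (c n * ct n * mr n)) atTop (nhds 0) :=
    tendsto_const_nhds.div_atTop hccm
  have ev3 : ∀ᶠ n in atTop, C / (c n * ct n * mr n) ≤ 1 :=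
    hCE.eventually (eventually_le_nhds one_pos)
  have ev4 : ∀ᶠ n in atTop, C / (c n * ct n * mr n) < (1 - τ) / τ :=
    hCE.eventually (eventually_lt_nhds (div_pos (by linarith) hτ0))
  have hone : (1:ℝ≥0∞) - ε / 2 < 1 :=
    ENNReal.sub_lt_self ENNReal.one_ne_top one_ne_zero (ENNReal.half_pos hε.ne').ne'
  have ev5 : ∀ᶠ n in atTop, 1 - ε / 2 < P {ω | κ ≤ lamhat n d ω} :=
    hsignal.eventually (eventually_gt_nhds hone)
  filter_upwards [ev_m1, ev1, ev2, ev3, ev4, ev5] with n hn1 hn2 hn3 hn4 hn5 hn6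
  have hcn := hcpos n
  have hctn := hctpos n
  have hmn : (0:ℝ) < mr n := lt_of_lt_of_le one_pos hn1
  -- derive pointwise ridge conditions h3, h4 of the core lemma
  have hprod : 0 < c n * ct n * mr n := by positivity
  have hCle : C ≤ c n * ct n * mr n := by
    rw [div_le_one hprod] at hn4; exact hn4
  have h3' : C / (mr n * c n) ≤ ct n := by
    rw [div_le_iff₀ (by positivity)]
    nlinarith
  have h4' : τ * (C / (mr n * c n) + ct n) < ct n := by
    have hlt : C < (1 - τ) / τ * (c n * ct n * mr n) := by
      rw [div_lt_iff₀ hprod] at hn5; nlinarith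
    have h6 : C / (mr n * c n) < (1 - τ) / τ * ct n := by
      rw [div_lt_iff₀ (by positivity)]
      calc C < (1 - τ) / τ * (c n * ct n * mr n) := hlt
        _ = (1 - τ) / τ * ct n * (mr n * c n) := by ring
    have hτ' : 0 < τ := hτ0
    have : τ * ((1 - τ) / τ * ct n) = (1 - τ) * ct n := by field_simp
    nlinarith
  -- good event
  set A : Set Ω := {ω | κ ≤ lamhat n d ω} with hA
  set B : Set Ω := {ω | mr n * lamhat n (d + 1) ω ≤ C} with hB
  have hAm : MeasurableSet A := measurableSet_le measurable_const (hmeas n d)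
  have hBm : MeasurableSet B :=
    measurableSet_le (measurable_const.mul (hmeas n (d + 1))) measurable_const
  have hsub : A ∩ B ⊆ {ω |
      {j | 1 ≤ j ∧ j ≤ p n - 2 ∧
        rRatioF (fun i => lamhat n i ω) (c n) (ct n) j ≤ τ}.Nonempty ∧
      sSup {j | 1 ≤ j ∧ j ≤ p n - 2 ∧
        rRatioF (fun i => lamhat n i ω) (c n) (ct n) j ≤ τ} = d} := by
    rintro ω ⟨hωA, hωB⟩
    exact tdrr_core (fun i => lamhat n i ω) (c n) (ct n) C (mr n) τ κ (p n) d hd (hp n)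
      (fun i j a b e => hsorted n ω i j a b e) (fun j a b => hnn n j ω a b)
      hκ hC hn1 hcn hctn hτ0 hτ1 hωA hωB hn2 (by linarith [hn3]) h3' h4'
  -- measure bounds
  have hPB : P Bᶜ ≤ ε / 2 := by
    have : Bᶜ = {ω | C < mr n * lamhat n (d + 1) ω} := by
      ext ω; simp [hB, not_le]
    rw [this]; exact htailC n
  have hPA : P Aᶜ ≤ ε / 2 := by
    rw [prob_compl_eq_one_sub hAm]
    rw [tsub_le_iff_right]
    calc (1:ℝ≥0∞) ≤ P A + ε / 2 := by
          rw [← tsub_le_iff_right]; exact (hn6.le)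
      _ = ε / 2 + P A := by rw [add_comm]
  have hcompl : P ((A ∩ B)ᶜ) ≤ ε := by
    rw [Set.compl_inter]
    calc P (Aᶜ ∪ Bᶜ) ≤ P Aᶜ + P Bᶜ := measure_union_le _ _
      _ ≤ ε / 2 + ε / 2 := add_le_add hPA hPB
      _ = ε := ENNReal.add_halves ε
  have hPAB : 1 - ε ≤ P (A ∩ B) := by
    have h1 : P (A ∩ B) = 1 - P ((A ∩ B)ᶜ) := by
      rw [prob_compl_eq_one_sub (hAm.inter hBm)]
      rw [ENNReal.sub_sub_cancel ENNReal.one_ne_top prob_le_one]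
    rw [h1]
    exact tsub_le_tsub_left hcompl 1
  constructor
  · exact hPAB.trans (measure_mono hsub)
  · exact (prob_le_one).trans le_self_add
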